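/- Let F : C(Z) → C(X) be the conditional expectation determined by the weak*-continuous family μ : X → P(Z) with supp(μ_x) ⊆ π⁻¹(x). Then F is faithful (F(b*b) = 0 ⇒ b = 0) if and only if the interior of the set Z_μ := {z ∈ Z : z ∉ supp(μ_{π(z)})} is empty. In particular, if supp(μ_x) = π⁻¹(x) for all x, then F is faithful. -/

import Mathlib

open MeasureTheory

/-- The (closed) support of a Borel measure: points all of whose open neighbourhoods have
nonzero measure. -/
def Measure.supp {Z : Type*} [TopologicalSpace Z] [MeasurableSpace Z]
    (m : Measure Z) : Set Z :=
  {z : Z | ∀ U : Set Z, IsOpen U → z ∈ U → m U ≠ 0}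

lemma isOpen_compl_supp {Z : Type*} [TopologicalSpace Z] [MeasurableSpace Z]
    (m : Measure Z) : IsOpen (Measure.supp m)ᶜ := by
  rw [isOpen_iff_forall_mem_open]
  intro z hz
  simp only [Set.mem_compl_iff, Measure.supp, Set.mem_setOf_eq, not_forall] at hz
  obtain ⟨U, hU, hzU, hmU⟩ := hz
  push_neg at hmU
  refine ⟨U, fun w hw => ?_, hU, hzU⟩
  simp only [Set.mem_compl_iff, Measure.supp, Set.mem_setOf_eq, not_forall]
  exact ⟨U, hU, hw, by simpa using hmU⟩

/-- For a regular measure, the complement of the support is null. -/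
lemma supp_compl_null {Z : Type*} [TopologicalSpace Z] [MeasurableSpace Z]
    (m : Measure Z) [m.Regular] : m (Measure.supp m)ᶜ = 0 := by
  by_contra hne
  have hpos : 0 < m (Measure.supp m)ᶜ := pos_iff_ne_zero.mpr hne
  obtain ⟨K, hKsub, hKc, hKm⟩ :=
    Measure.Regular.innerRegular (isOpen_compl_supp m) 0 hpos
  -- cover K by null open sets
  have hcov : ∀ z ∈ K, ∃ U : Set Z, IsOpen U ∧ z ∈ U ∧ m U = 0 := by
    intro z hz
    have := hKsub hz
    simp only [Set.mem_compl_iff, Measure.supp, Set.mem_setOf_eq, not_forall] at this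
    obtain ⟨U, hU, hzU, hmU⟩ := this
    push_neg at hmU
    exact ⟨U, hU, hzU, by simpa using hmU⟩
  choose U hUopen hUmem hUnull using hcov
  have hKcov : K ⊆ ⋃ z : K, U z z.2 := fun z hz =>
    Set.mem_iUnion.mpr ⟨⟨z, hz⟩, hUmem z hz⟩
  obtain ⟨t, ht⟩ := hKc.elim_finite_subcover (fun z : K => U z z.2)
    (fun z => hUopen z z.2) hKcov
  have : m K = 0 := by
    refine le_antisymm ?_ zero_le
    calc m K ≤ m (⋃ i ∈ t, U i i.2) := measure_mono ht
    _ ≤ ∑ i ∈ t, m (U i i.2) := measure_biUnion_finset_le t _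
    _ = 0 := Finset.sum_eq_zero fun i _ => hUnull i i.2
  exact hKm.ne' this

/-- If the integral of `b*b` vanishes, then `b` vanishes on the support. -/
lemma eq_zero_on_supp {Z : Type*} [TopologicalSpace Z] [CompactSpace Z]
    [MeasurableSpace Z] [BorelSpace Z] [T2Space Z]
    (m : Measure Z) [IsProbabilityMeasure m] (b : C(Z, ℝ))
    (h : ∫ z, b z * b z ∂m = 0) {z : Z} (hz : z ∈ Measure.supp m) : b z = 0 := by
  by_contra hb
  set c := b z * b z with hc_def
  have hc : 0 < c := mul_self_pos.mpr hb
  set U := {w : Z | c / 2 < b w * b w} with hU_def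
  have hUopen : IsOpen U :=
    isOpen_lt continuous_const ((map_continuous b).mul (map_continuous b))
  have hzU : z ∈ U := by simp only [hU_def, Set.mem_setOf_eq, ← hc_def]; linarith
  have hmU : m U ≠ 0 := hz U hUopen hzU
  have hint : Integrable (fun w => b w * b w) m :=
    ((map_continuous b).mul (map_continuous b)).integrable_of_hasCompactSupport
      (HasCompactSupport.of_compactSpace _)
  have h1 : c / 2 * (m U).toReal ≤ ∫ w in U, b w * b w ∂m :=
    by
      have := setIntegral_ge_of_const_le_real hUopen.measurableSet (measure_ne_top m U)
        (fun w hw => le_of_lt hw) hint.integrableOn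
      simp only [Measure.real, smul_eq_mul] at this
      linarith
  have h2 : ∫ w in U, b w * b w ∂m ≤ ∫ w, b w * b w ∂m :=
    setIntegral_le_integral hint (Filter.Eventually.of_forall fun w => mul_self_nonneg _)
  have hpos : 0 < (m U).toReal := ENNReal.toReal_pos hmU (measure_ne_top m U)
  nlinarith

theorem condexp_faithful_iff
    (Z : Type*) [TopologicalSpace Z] [CompactSpace Z] [T2Space Z]
    [MeasurableSpace Z] [BorelSpace Z]
    (X : Type*) [TopologicalSpace X] [CompactSpace X] [T2Space X]
    (π : C(Z, X)) (hπ : Function.Surjective π)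
    (hquot : ∀ z z' : Z, π z = π z' ↔ ∀ a : C(X, ℝ), a (π z) = a (π z'))
    (μ : X → ProbabilityMeasure Z) (hμc : Continuous μ)
    (hreg : ∀ x : X, (μ x : Measure Z).Regular)
    (hsupp : ∀ x : X, Measure.supp (μ x : Measure Z) ⊆ π ⁻¹' {x})
    (F : C(Z, ℝ) →ₗ[ℝ] C(X, ℝ))
    (hF : ∀ (b : C(Z, ℝ)) (x : X), F b x = ∫ z, b z ∂(μ x : Measure Z)) :
    ((∀ b : C(Z, ℝ), F (b * b) = 0 → b = 0) ↔
      interior {z : Z | z ∉ Measure.supp (μ (π z) : Measure Z)} = ∅) ∧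
    ((∀ x : X, Measure.supp (μ x : Measure Z) = π ⁻¹' {x}) →
      ∀ b : C(Z, ℝ), F (b * b) = 0 → b = 0) := by
  have main : (∀ b : C(Z, ℝ), F (b * b) = 0 → b = 0) ↔
      interior {z : Z | z ∉ Measure.supp (μ (π z) : Measure Z)} = ∅ := by
    constructor
    · intro hfaith
      by_contra hne
      obtain ⟨z₀, hz₀⟩ := Set.nonempty_iff_ne_empty.mpr hne
      obtain ⟨f, hf0, hf1, hf01⟩ := exists_continuous_zero_one_of_isClosed
        (isClosed_compl_iff.mpr isOpen_interior) (isClosed_singleton (x := z₀))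
        (Set.disjoint_singleton_right.mpr (by simpa using hz₀))
      have hFz : F (f * f) = 0 := by
        ext x
        rw [ContinuousMap.zero_apply, hF]
        have hnull : (μ x : Measure Z) (Measure.supp (μ x : Measure Z))ᶜ = 0 := by
          have := hreg x
          exact supp_compl_null _
        have hae : ∀ᵐ z ∂(μ x : Measure Z), (f * f) z = (0 : ℝ) := by
          rw [ae_iff]
          refine measure_mono_null (fun z hz => ?_) hnull
          simp only [Set.mem_setOf_eq] at hz
          intro hzsupp
          have hπz : π z = x := hsupp x hzsupp
          have hzU : z ∈ interior {z : Z | z ∉ Measure.supp (μ (π z) : Measure Z)} := by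
            by_contra h
            exact hz (by simp [ContinuousMap.mul_apply, hf0 h])
          have hmem := interior_subset hzU
          simp only [Set.mem_setOf_eq, hπz] at hmem
          exact hmem hzsupp
        exact integral_eq_zero_of_ae hae
      have := hfaith f hFz
      have h1 : f z₀ = 1 := hf1 rfl
      rw [this] at h1
      simpa using h1
    · intro hint b hb
      ext z
      rw [ContinuousMap.zero_apply]
      by_contra hbz
      have hV : IsOpen {w : Z | b w ≠ 0} :=
        isOpen_ne_fun (map_continuous b) continuous_const
      have hVsub : {w : Z | b w ≠ 0} ⊆
          {z : Z | z ∉ Measure.supp (μ (π z) : Measure Z)} := by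
        intro w hw hwsupp
        have hi : ∫ u, b u * b u ∂(μ (π w) : Measure Z) = 0 := by
          have := congrArg (fun g => ContinuousMap.toFun g (π w)) hb
          simp only [ContinuousMap.toFun_eq_coe, ContinuousMap.zero_apply] at this
          rw [hF] at this
          simpa [ContinuousMap.mul_apply] using this
        have := hreg (π w)
        exact hw (eq_zero_on_supp (μ (π w) : Measure Z) b hi hwsupp)
      have : {w : Z | b w ≠ 0} ⊆
          interior {z : Z | z ∉ Measure.supp (μ (π z) : Measure Z)} :=
        hV.subset_interior_iff.mpr hVsub
      rw [hint] at this
      exact this hbz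
  refine ⟨main, fun hs => main.mpr ?_⟩
  have hempty : {z : Z | z ∉ Measure.supp (μ (π z) : Measure Z)} = ∅ := by
    ext z
    simp only [Set.mem_setOf_eq, Set.mem_empty_iff_false, iff_false, not_not]
    rw [hs (π z)]
    exact rfl
  rw [hempty, interior_empty]
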